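/- The function g(x) = (1 − cos x)/(x − sin x) is strictly decreasing on the open interval (0, 2π), tends to +∞ as x → 0⁺, and tends to 0 as x → 2π⁻. Consequently, for every c > 0 there exists a unique x₀ ∈ (0, 2π) with (1 − cos x₀)/(x₀ − sin x₀) = c. -/

import Mathlib

open Set Filter

open Real

lemma key_ineq (t : ℝ) (ht : 0 < t) (ht' : t < π) : t * Real.cos t < Real.sin t := by
  have hmono : StrictMonoOn (fun t => Real.sin t - t * Real.cos t) (Icc 0 π) := by
    apply strictMonoOn_of_deriv_pos (convex_Icc 0 π)
    · fun_prop
    · intro x hx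
      rw [interior_Icc] at hx
      have hd : HasDerivAt (fun t => Real.sin t - t * Real.cos t) (x * Real.sin x) x := by
        have h1 := (Real.hasDerivAt_sin x).sub (((hasDerivAt_id x).mul (Real.hasDerivAt_cos x)))
        refine h1.congr_deriv ?_; simp only [id]; ring
      rw [hd.deriv]
      exact mul_pos hx.1 (Real.sin_pos_of_pos_of_lt_pi hx.1 hx.2)
  have := hmono (by constructor <;> [rfl; positivity] : (0:ℝ) ∈ Icc 0 π)
    ⟨ht.le, ht'.le⟩ ht
  simp at this
  linarith

lemma num_neg (x : ℝ) (hx : x ∈ Ioo 0 (2*π)) :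
    Real.sin x * (x - Real.sin x) - (1 - Real.cos x) * (1 - Real.cos x) < 0 := by
  have ht : 0 < x/2 := by linarith [hx.1]
  have ht' : x/2 < π := by linarith [hx.2]
  have hk := key_ineq (x/2) ht ht'
  have hs : Real.sin (x/2) > 0 := Real.sin_pos_of_pos_of_lt_pi ht ht'
  have h1 : Real.sin x = 2 * Real.sin (x/2) * Real.cos (x/2) := by
    rw [← Real.sin_two_mul]; ring_nf
  have h2 : Real.cos x = Real.cos (x/2)^2 - Real.sin (x/2)^2 := by
    rw [← Real.cos_two_mul']; ring_nf
  have hpy := Real.sin_sq_add_cos_sq (x/2)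
  have hprod : Real.sin (x/2) * (Real.sin (x/2) - x/2 * Real.cos (x/2)) > 0 :=
    mul_pos hs (by linarith)
  have heq : Real.sin x * (x - Real.sin x) - (1 - Real.cos x) * (1 - Real.cos x)
      = -(4 * (Real.sin (x/2) * (Real.sin (x/2) - x/2 * Real.cos (x/2)))) := by
    rw [h1, h2]
    linear_combination (-(Real.sin (x/2)^2 + Real.cos (x/2)^2 - 1)) * hpy
  rw [heq]; linarith

lemma den_pos (x : ℝ) (hx : 0 < x) : 0 < x - Real.sin x := by
  rcases le_or_gt x 1 with h | h
  · linarith [Real.sin_lt hx]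
  · linarith [Real.sin_le_one x, Real.sin_lt hx]

lemma g_hasDerivAt (x : ℝ) (hx : x - Real.sin x ≠ 0) :
    HasDerivAt (fun x : ℝ => (1 - Real.cos x) / (x - Real.sin x))
      ((Real.sin x * (x - Real.sin x) - (1 - Real.cos x) * (1 - Real.cos x)) / (x - Real.sin x)^2) x := by
  have h1 : HasDerivAt (fun x : ℝ => 1 - Real.cos x) (Real.sin x) x := by
    have := (Real.hasDerivAt_cos x).const_sub 1
    simpa using this
  have h2 : HasDerivAt (fun x : ℝ => x - Real.sin x) (1 - Real.cos x) x :=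
    (hasDerivAt_id x).sub (Real.hasDerivAt_sin x)
  exact h1.div h2 hx

lemma g_anti : StrictAntiOn (fun x : ℝ => (1 - Real.cos x) / (x - Real.sin x))
    (Ioo 0 (2 * π)) := by
  apply strictAntiOn_of_deriv_neg (convex_Ioo 0 (2*π))
  · apply ContinuousOn.div (by fun_prop) (by fun_prop)
    exact fun x hx => (den_pos x hx.1).ne'
  · intro x hx
    rw [interior_Ioo] at hx
    have hd := den_pos x hx.1
    rw [(g_hasDerivAt x hd.ne').deriv]
    exact div_neg_of_neg_of_pos (num_neg x hx) (by positivity)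

lemma g_tendsto_two_pi : Tendsto (fun x : ℝ => (1 - Real.cos x) / (x - Real.sin x))
    (nhdsWithin (2 * π) (Iio (2 * π))) (nhds 0) := by
  have h1 : Tendsto (fun x : ℝ => 1 - Real.cos x) (nhdsWithin (2*π) (Iio (2*π)))
      (nhds (1 - Real.cos (2*π))) :=
    ((continuous_const.sub Real.continuous_cos).tendsto _).mono_left nhdsWithin_le_nhds
  have h2 : Tendsto (fun x : ℝ => x - Real.sin x) (nhdsWithin (2*π) (Iio (2*π)))
      (nhds (2*π - Real.sin (2*π))) :=
    ((continuous_id.sub Real.continuous_sin).tendsto _).mono_left nhdsWithin_le_nhds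
  have := h1.div h2 (by
    rw [Real.sin_two_pi, sub_zero]
    positivity)
  simpa [Real.cos_two_pi, Real.sin_two_pi, Pi.div_def] using this

lemma g_lb (x : ℝ) (hx : x ∈ Ioo (0:ℝ) 1) :
    x⁻¹ ≤ (1 - Real.cos x) / (x - Real.sin x) := by
  obtain ⟨hx0, hx1⟩ := hx
  have hden := den_pos x hx0
  have h1 : x - x^3/4 < Real.sin x := by linarith [Real.sin_gt_sub_cube hx0, pow_pos hx0 3]
  have h2 : x/2 - (x/2)^3/4 < Real.sin (x/2) := by linarith [Real.sin_gt_sub_cube (x := x/2) (by linarith), pow_pos (show (0:ℝ) < x/2 by linarith) 3]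
  have hx3 : x^3 < x := by nlinarith [mul_pos hx0 hx0]
  have hs : 0 < Real.sin (x/2) := by nlinarith
  have hpy := Real.sin_sq_add_cos_sq (x/2)
  have hcos : Real.cos x = 1 - 2 * Real.sin (x/2)^2 := by
    have h := Real.cos_two_mul' (x/2)
    rw [show 2*(x/2) = x by ring] at h
    linarith
  have hnum : 1 - Real.cos x ≥ 2 * Real.sin (x/2)^2 := by linarith
  rw [inv_eq_one_div, div_le_div_iff₀ hx0 hden]
  have hsge : Real.sin (x/2) ≥ 15/32 * x := by nlinarith
  have hss : Real.sin (x/2)^2 ≥ (15/32*x)^2 := by nlinarith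
  have hfin : (1 - Real.cos x)*x ≥ 2*(15/32*x)^2*x := by nlinarith
  nlinarith

lemma g_tendsto_zero : Tendsto (fun x : ℝ => (1 - Real.cos x) / (x - Real.sin x))
    (nhdsWithin 0 (Ioi 0)) atTop := by
  apply tendsto_atTop_mono' _ _ tendsto_inv_nhdsGT_zero
  filter_upwards [Ioo_mem_nhdsGT_of_mem (by constructor <;> norm_num : (0:ℝ) ∈ Ico 0 1)]
    with x hx using g_lb x hx

theorem g_strictAnti_and_unique_solution' :
    StrictAntiOn (fun x : ℝ => (1 - Real.cos x) / (x - Real.sin x))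
      (Ioo 0 (2 * Real.pi)) ∧
    Tendsto (fun x : ℝ => (1 - Real.cos x) / (x - Real.sin x))
      (nhdsWithin 0 (Ioi 0)) atTop ∧
    Tendsto (fun x : ℝ => (1 - Real.cos x) / (x - Real.sin x))
      (nhdsWithin (2 * Real.pi) (Iio (2 * Real.pi))) (nhds 0) ∧
    ∀ c : ℝ, 0 < c → ∃! x₀ : ℝ, x₀ ∈ Ioo 0 (2 * Real.pi) ∧
      (1 - Real.cos x₀) / (x₀ - Real.sin x₀) = c := by
  set g : ℝ → ℝ := fun x => (1 - Real.cos x) / (x - Real.sin x) with hg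
  have hpi := Real.pi_pos
  refine ⟨g_anti, g_tendsto_zero, g_tendsto_two_pi, fun c hc => ?_⟩
  -- find a with g a ≥ c
  have hEv1 : ∀ᶠ x in nhdsWithin 0 (Ioi (0:ℝ)), c ≤ g x ∧ x ∈ Ioo 0 (2*π) := by
    have h1 : ∀ᶠ x in nhdsWithin 0 (Ioi (0:ℝ)), c ≤ g x :=
      g_tendsto_zero.eventually (eventually_ge_atTop c)
    have h2 : Ioo (0:ℝ) (2*π) ∈ nhdsWithin 0 (Ioi (0:ℝ)) :=
      Ioo_mem_nhdsGT_of_mem ⟨le_refl 0, by positivity⟩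
    exact h1.and h2
  obtain ⟨a, ha1, ha2⟩ := hEv1.exists
  -- find b with g b < c
  have hEv2 : ∀ᶠ x in nhdsWithin (2*π) (Iio (2*π)), g x < c ∧ x ∈ Ioo 0 (2*π) := by
    have h1 : ∀ᶠ x in nhdsWithin (2*π) (Iio (2*π)), g x < c :=
      g_tendsto_two_pi.eventually (eventually_lt_nhds hc)
    have h2 : Ioo (0:ℝ) (2*π) ∈ nhdsWithin (2*π) (Iio (2*π)) :=
      Ioo_mem_nhdsLT_of_mem ⟨by positivity, le_refl _⟩
    exact h1.and h2
  obtain ⟨b, hb1, hb2⟩ := hEv2.exists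
  have hab : a < b := by
    rcases lt_trichotomy a b with h | h | h
    · exact h
    · exfalso; rw [h] at ha1; linarith
    · exfalso; have := g_anti hb2 ha2 h; linarith
  have hsub : Icc a b ⊆ Ioo 0 (2*π) := fun y hy => ⟨lt_of_lt_of_le ha2.1 hy.1, lt_of_le_of_lt hy.2 hb2.2⟩
  have hcont : ContinuousOn g (Icc a b) := by
    apply ContinuousOn.div (by fun_prop) (by fun_prop)
    exact fun y hy => (den_pos y (hsub hy).1).ne'
  have hivt := intermediate_value_Icc' hab.le hcont
  have hcmem : c ∈ Icc (g b) (g a) := ⟨hb1.le, ha1⟩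
  obtain ⟨x₀, hx₀, hgx₀⟩ := hivt hcmem
  refine ⟨x₀, ⟨hsub hx₀, hgx₀⟩, ?_⟩
  rintro y ⟨hy, hgy⟩
  exact g_anti.injOn hy (hsub hx₀) (by show g y = g x₀; exact hgy.trans hgx₀.symm)

/-- The function `g(x) = (1 − cos x)/(x − sin x)` is strictly decreasing on
`(0, 2π)`, tends to `+∞` as `x → 0⁺` and to `0` as `x → 2π⁻`; consequently, for
every `c > 0` there is a unique `x₀ ∈ (0, 2π)` with `g(x₀) = c`. -/
theorem g_strictAnti_and_unique_solution :
    StrictAntiOn (fun x : ℝ => (1 - Real.cos x) / (x - Real.sin x))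
      (Ioo 0 (2 * Real.pi)) ∧
    Tendsto (fun x : ℝ => (1 - Real.cos x) / (x - Real.sin x))
      (nhdsWithin 0 (Ioi 0)) atTop ∧
    Tendsto (fun x : ℝ => (1 - Real.cos x) / (x - Real.sin x))
      (nhdsWithin (2 * Real.pi) (Iio (2 * Real.pi))) (nhds 0) ∧
    ∀ c : ℝ, 0 < c → ∃! x₀ : ℝ, x₀ ∈ Ioo 0 (2 * Real.pi) ∧
      (1 - Real.cos x₀) / (x₀ - Real.sin x₀) = c := by
  exact g_strictAnti_and_unique_solution'
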